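/- Define ψ(r) := arccos((12/5)r - 1/5) - 2(1-r)·arctan(√(4(1-r)² - 1)) for r ∈ [1 - 1/√3, 1/2]. Then ψ is concave on this interval and ψ(r) ≥ 0; equivalently, cos((1-r)·ℓ(r)) ≥ (12/5)r - 1/5 where ℓ(r) = 2 arctan(√(4(1-r)²-1)). -/

import Mathlib

open Real Set

noncomputable def PsiF : ℝ → ℝ := fun r => Real.arccos ((12 / 5) * r - 1 / 5) -
    2 * (1 - r) * Real.arctan (Real.sqrt (4 * (1 - r) ^ 2 - 1))

noncomputable def PhiF : ℝ → ℝ := fun x => -(12/5) * (Real.sqrt (1 - (12/5*x - 1/5)^2))⁻¹ +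
    2 * Real.arctan (Real.sqrt (4*(1-x)^2-1)) + 2 * (Real.sqrt (4*(1-x)^2-1))⁻¹

noncomputable def Phi2F : ℝ → ℝ := fun x =>
    -(144/25) * (12/5*x - 1/5) / ((1 - (12/5*x - 1/5)^2) * Real.sqrt (1 - (12/5*x - 1/5)^2))
    - 2 / ((1-x) * Real.sqrt (4*(1-x)^2-1))
    + 8 * (1-x) / ((4*(1-x)^2-1) * Real.sqrt (4*(1-x)^2-1))

lemma sqrt3_facts : (Real.sqrt 3) ^ 2 = 3 ∧ (1.732:ℝ) < Real.sqrt 3 ∧ Real.sqrt 3 < 2 := by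
  have h : (Real.sqrt 3) ^ 2 = 3 := Real.sq_sqrt (by norm_num)
  have h0 : 0 < Real.sqrt 3 := Real.sqrt_pos.2 (by norm_num)
  refine ⟨h, ?_, ?_⟩ <;> nlinarith

section facts
variable {x : ℝ} (hx0 : 1 - 1 / Real.sqrt 3 < x) (hx1 : x < 1/2)

include hx0 hx1 in
lemma h3sq : 3 * (1-x)^2 < 1 := by
  obtain ⟨h, h17, h2⟩ := sqrt3_facts
  have h0 : 0 < Real.sqrt 3 := by linarith
  have h1x : 1 - x < 1 / Real.sqrt 3 := by linarith
  have : Real.sqrt 3 * (1 - x) < 1 := by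
    calc Real.sqrt 3 * (1-x) < Real.sqrt 3 * (1 / Real.sqrt 3) := by
          exact mul_lt_mul_of_pos_left h1x h0
    _ = 1 := by field_simp
  nlinarith [this, h0, mul_pos h0 h0]

include hx0 hx1 in
lemma hq_pos : 0 < 4*(1-x)^2 - 1 := by nlinarith

include hx0 hx1 in
lemma hq_lt : 4*(1-x)^2 - 1 < 1/3 := by have := h3sq hx0 hx1; nlinarith

include hx0 hx1 in
lemma hu_pos : 0 < 12/5*x - 1/5 := by have := h3sq hx0 hx1; nlinarith

include hx1 in
lemma hu_lt : 12/5*x - 1/5 < 1 := by nlinarith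

include hx0 hx1 in
lemma hp_pos : 0 < 1 - (12/5*x - 1/5)^2 := by
  have h1 := hu_pos hx0 hx1; have h2 := hu_lt hx1; nlinarith

end facts

lemma hasDerivAt_inner (x : ℝ) : HasDerivAt (fun r : ℝ => 4*(1-r)^2 - 1) (-(8*(1-x))) x := by
  have h : HasDerivAt (fun r : ℝ => 1 - r) (-1) x := (hasDerivAt_id x).const_sub 1
  have := ((h.pow 2).const_mul 4).sub_const 1
  refine this.congr_deriv ?_; norm_num; ring

lemma hasDerivAt_g (x : ℝ) : HasDerivAt (fun r : ℝ => 12/5*r - 1/5) (12/5) x := by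
  simpa using ((hasDerivAt_id x).const_mul (12/5)).sub_const (1/5)

lemma hasDerivAt_PsiF {x : ℝ} (hx0 : 1 - 1 / Real.sqrt 3 < x) (hx1 : x < 1/2) :
    HasDerivAt PsiF (PhiF x) x := by
  have hq := hq_pos hx0 hx1
  have hp := hp_pos hx0 hx1
  have hsq : 0 < Real.sqrt (4*(1-x)^2-1) := Real.sqrt_pos.2 hq
  have hsqq : (Real.sqrt (4*(1-x)^2-1)) ^ 2 = 4*(1-x)^2-1 := Real.sq_sqrt hq.le
  have hg := hasDerivAt_g x
  have hne1 : 12/5*x - 1/5 ≠ -1 := by have := hu_pos hx0 hx1; linarith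
  have hne2 : 12/5*x - 1/5 ≠ 1 := by have := hu_lt hx1; linarith
  have harccos : HasDerivAt (fun r : ℝ => Real.arccos (12/5*r - 1/5))
      (-(1 / Real.sqrt (1 - (12/5*x - 1/5)^2)) * (12/5)) x :=
    (Real.hasDerivAt_arccos hne1 hne2).comp (h₂ := Real.arccos) x hg
  have hqd := hasDerivAt_inner x
  have hsqrt : HasDerivAt (fun r : ℝ => Real.sqrt (4*(1-r)^2-1))
      (1 / (2 * Real.sqrt (4*(1-x)^2-1)) * (-(8*(1-x)))) x :=
    (Real.hasDerivAt_sqrt hq.ne').comp x hqd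
  have harctan : HasDerivAt (fun r : ℝ => Real.arctan (Real.sqrt (4*(1-r)^2-1)))
      (1 / (1 + Real.sqrt (4*(1-x)^2-1) ^ 2) * (1 / (2 * Real.sqrt (4*(1-x)^2-1)) * (-(8*(1-x))))) x :=
    (Real.hasDerivAt_arctan _).comp x hsqrt
  have hc : HasDerivAt (fun r : ℝ => 2*(1-r)) (-2) x := by
    simpa using ((hasDerivAt_id x).const_sub 1).const_mul 2
  have hT := hc.mul harctan
  have htotal := harccos.sub hT
  have h1x : (0:ℝ) < 1 - x := by linarith
  have hsp : 0 < Real.sqrt (1 - (12/5*x - 1/5)^2) := Real.sqrt_pos.2 hp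
  refine htotal.congr_deriv ?_; symm
  rw [PhiF, hsqq]
  field_simp
  ring


lemma hasDerivAt_PhiF {x : ℝ} (hx0 : 1 - 1 / Real.sqrt 3 < x) (hx1 : x < 1/2) :
    HasDerivAt PhiF (Phi2F x) x := by
  have hq := hq_pos hx0 hx1
  have hp := hp_pos hx0 hx1
  have hsq : 0 < Real.sqrt (4*(1-x)^2-1) := Real.sqrt_pos.2 hq
  have hsp : 0 < Real.sqrt (1 - (12/5*x - 1/5)^2) := Real.sqrt_pos.2 hp
  have hsqq : (Real.sqrt (4*(1-x)^2-1)) ^ 2 = 4*(1-x)^2-1 := Real.sq_sqrt hq.le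
  have hspp : (Real.sqrt (1 - (12/5*x - 1/5)^2)) ^ 2 = 1 - (12/5*x - 1/5)^2 := Real.sq_sqrt hp.le
  have h1x : (0:ℝ) < 1 - x := by linarith
  -- derivative of p r := 1 - (12/5*r-1/5)^2
  have hpd : HasDerivAt (fun r : ℝ => 1 - (12/5*r - 1/5)^2)
      (-(2 * (12/5*x - 1/5) ^ 1 * (12/5))) x := (((hasDerivAt_g x).pow 2).const_sub 1)
  have hsqrtp : HasDerivAt (fun r : ℝ => Real.sqrt (1 - (12/5*r - 1/5)^2))
      (1 / (2 * Real.sqrt (1 - (12/5*x - 1/5)^2)) * (-(2 * (12/5*x - 1/5) ^ 1 * (12/5)))) x :=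
    (Real.hasDerivAt_sqrt hp.ne').comp x hpd
  have hterm1 := (hsqrtp.inv hsp.ne').const_mul (-(12/5) : ℝ)
  have hqd := hasDerivAt_inner x
  have hsqrt : HasDerivAt (fun r : ℝ => Real.sqrt (4*(1-r)^2-1))
      (1 / (2 * Real.sqrt (4*(1-x)^2-1)) * (-(8*(1-x)))) x :=
    (Real.hasDerivAt_sqrt hq.ne').comp x hqd
  have harctan : HasDerivAt (fun r : ℝ => Real.arctan (Real.sqrt (4*(1-r)^2-1)))
      (1 / (1 + Real.sqrt (4*(1-x)^2-1) ^ 2) * (1 / (2 * Real.sqrt (4*(1-x)^2-1)) * (-(8*(1-x))))) x :=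
    (Real.hasDerivAt_arctan _).comp x hsqrt
  have hterm2 := harctan.const_mul (2:ℝ)
  have hterm3 := (hsqrt.inv hsq.ne').const_mul (2:ℝ)
  have htotal := (hterm1.add hterm2).add hterm3
  refine htotal.congr_deriv ?_; symm
  rw [Phi2F]
  simp only [pow_one]
  set P := 1 - (12/5*x - 1/5)^2 with hP
  set Q := 4*(1-x)^2-1 with hQ
  set A := Real.sqrt (1 - (12/5*x - 1/5)^2) with hA
  set B := Real.sqrt (4*(1-x)^2-1) with hB
  have hA2 : A^2 = P := hspp
  have hB2 : B^2 = Q := hsqq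
  have hA3 : A^3 = P * A := by rw [pow_succ, hA2]
  have hB3 : B^3 = Q * B := by rw [pow_succ, hB2]
  have hA4 : A^4 = P^2 := by rw [show (4:ℕ)=2*2 from rfl, pow_mul, hA2]
  have hB4 : B^4 = Q^2 := by rw [show (4:ℕ)=2*2 from rfl, pow_mul, hB2]
  have hA5 : A^5 = P^2 * A := by rw [pow_succ, hA4]
  have hB5 : B^5 = Q^2 * B := by rw [pow_succ, hB4]
  have hA6 : A^6 = P^3 := by rw [show (6:ℕ)=2*3 from rfl, pow_mul, hA2]
  have hB6 : B^6 = Q^3 := by rw [show (6:ℕ)=2*3 from rfl, pow_mul, hB2]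
  have hA7 : A^7 = P^3 * A := by rw [pow_succ, hA6]
  have hB7 : B^7 = Q^3 * B := by rw [pow_succ, hB6]
  have hA8 : A^8 = P^4 := by rw [show (8:ℕ)=2*4 from rfl, pow_mul, hA2]
  have hB8 : B^8 = Q^4 := by rw [show (8:ℕ)=2*4 from rfl, pow_mul, hB2]
  have h4 : 1 + B^2 ≠ 0 := by rw [hB2, hQ]; nlinarith
  have hAne : A ≠ 0 := hsp.ne'
  have hBne : B ≠ 0 := hsq.ne'
  have hPne : P ≠ 0 := hp.ne'
  have hQne : Q ≠ 0 := hq.ne'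
  field_simp [hAne, hBne, h4, hPne, hQne, h1x.ne']
  ring_nf
  simp only [hA2, hB2, hA3, hB3, hA4, hB4, hA5, hB5, hA6, hB6, hA7, hB7, hA8, hB8]
  rw [hP, hQ]
  ring

set_option maxHeartbeats 1000000 in
lemma Phi2F_nonpos {x : ℝ} (hx0 : 1 - 1 / Real.sqrt 3 < x) (hx1 : x < 1/2) :
    Phi2F x ≤ 0 := by
  have hq := hq_pos hx0 hx1
  have hp := hp_pos hx0 hx1
  have hu := hu_pos hx0 hx1
  have h3 := h3sq hx0 hx1
  have hsq : 0 < Real.sqrt (4*(1-x)^2-1) := Real.sqrt_pos.2 hq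
  have hsp : 0 < Real.sqrt (1 - (12/5*x - 1/5)^2) := Real.sqrt_pos.2 hp
  have hsqq : (Real.sqrt (4*(1-x)^2-1)) ^ 2 = 4*(1-x)^2-1 := Real.sq_sqrt hq.le
  have hspp : (Real.sqrt (1 - (12/5*x - 1/5)^2)) ^ 2 = 1 - (12/5*x - 1/5)^2 := Real.sq_sqrt hp.le
  have h1x : (0:ℝ) < 1 - x := by linarith
  have ecomb : - 2 / ((1-x) * Real.sqrt (4*(1-x)^2-1))
      + 8 * (1-x) / ((4*(1-x)^2-1) * Real.sqrt (4*(1-x)^2-1))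
      = 2 / ((1-x) * ((4*(1-x)^2-1) * Real.sqrt (4*(1-x)^2-1))) := by
    rw [div_add_div _ _ (by positivity) (by positivity), div_eq_div_iff (by positivity) (by positivity)]
    nlinarith [hsqq, hsq, h1x, hq]
  have key : 2 / ((1-x) * ((4*(1-x)^2-1) * Real.sqrt (4*(1-x)^2-1)))
      ≤ 144/25 * (12/5*x - 1/5) / ((1 - (12/5*x - 1/5)^2) * Real.sqrt (1 - (12/5*x - 1/5)^2)) := by
    rw [div_le_div_iff₀ (by positivity) (by positivity)]
    have eL : 2 * ((1 - (12/5*x - 1/5)^2) * Real.sqrt (1 - (12/5*x - 1/5)^2))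
        = Real.sqrt (4 * (1 - (12/5*x - 1/5)^2)^3) := by
      rw [show 4 * (1 - (12/5*x - 1/5)^2)^3
            = (2 * (1 - (12/5*x - 1/5)^2))^2 * (1 - (12/5*x - 1/5)^2) by ring,
        Real.sqrt_mul (by positivity), Real.sqrt_sq (by linarith)]
      ring
    have eR : 144/25 * (12/5*x - 1/5) * ((1-x) * ((4*(1-x)^2-1) * Real.sqrt (4*(1-x)^2-1)))
        = Real.sqrt ((144/25 * (12/5*x - 1/5) * (1-x) * (4*(1-x)^2-1))^2 * (4*(1-x)^2-1)) := by
      have hc0 : (0:ℝ) ≤ 144/25 * (12/5*x - 1/5) * (1-x) * (4*(1-x)^2-1) := by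
        nlinarith [mul_pos (mul_pos hu h1x) hq]
      rw [Real.sqrt_mul (sq_nonneg _), Real.sqrt_sq hc0]
      ring
    rw [eL, eR]
    apply Real.sqrt_le_sqrt
    have hred : 8*(1+3*x)^3 ≤ 3*(12*x-1)^2*(1-x)^2*(3-2*x)^3 := by
      nlinarith [sq_nonneg (1-2*x), sq_nonneg (3*(1-x)^2-1),
        mul_nonneg (sub_nonneg.2 hx1.le) (sub_nonneg.2 h3.le), sq_nonneg (x-0.45),
        mul_nonneg (mul_nonneg (sub_nonneg.2 hx1.le) (sub_nonneg.2 hx1.le)) (sub_nonneg.2 h3.le),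
        sq_nonneg ((1-2*x)*(3*(1-x)^2-1))]
    have hc : (0:ℝ) ≤ (1-2*x)^3 := pow_nonneg (by linarith) 3
    linarith [mul_nonneg hc (sub_nonneg.2 hred)]
  have hsplit : Phi2F x = -(144/25 * (12/5*x - 1/5) /
        ((1 - (12/5*x - 1/5)^2) * Real.sqrt (1 - (12/5*x - 1/5)^2)))
      + (- 2 / ((1-x) * Real.sqrt (4*(1-x)^2-1))
        + 8 * (1-x) / ((4*(1-x)^2-1) * Real.sqrt (4*(1-x)^2-1))) := by
    rw [Phi2F]; ring
  rw [hsplit, ecomb]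
  linarith [key]

lemma PsiF_continuous : Continuous PsiF := by
  unfold PsiF
  exact (Real.continuous_arccos.comp (by continuity)).sub
    ((by continuity : Continuous fun r : ℝ => 2*(1-r)).mul
      (Real.continuous_arctan.comp (Real.continuous_sqrt.comp (by continuity))))

lemma PsiF_concave : ConcaveOn ℝ (Set.Icc (1 - 1 / Real.sqrt 3) (1 / 2)) PsiF := by
  apply concaveOn_of_hasDerivWithinAt2_nonpos (f' := PhiF) (f'' := Phi2F)
    (convex_Icc _ _) PsiF_continuous.continuousOn
  · intro x hx
    rw [interior_Icc] at hx
    exact (hasDerivAt_PsiF hx.1 hx.2).hasDerivWithinAt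
  · intro x hx
    rw [interior_Icc] at hx
    exact (hasDerivAt_PhiF hx.1 hx.2).hasDerivWithinAt
  · intro x hx
    rw [interior_Icc] at hx
    exact Phi2F_nonpos hx.1 hx.2

lemma PsiF_half : PsiF (1/2) = 0 := by
  have h1 : (12:ℝ)/5 * (1/2) - 1/5 = 1 := by norm_num
  have h2 : 4*(1-(1:ℝ)/2)^2 - 1 = 0 := by norm_num
  rw [PsiF]
  norm_num [h1, h2, Real.arccos_one]

lemma PsiF_left : 0 ≤ PsiF (1 - 1 / Real.sqrt 3) := by
  obtain ⟨hs3sq, hs17, hs2⟩ := sqrt3_facts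
  have hs3pos : (0:ℝ) < Real.sqrt 3 := by linarith
  have h13 : (1:ℝ)/Real.sqrt 3 = Real.sqrt 3/3 := by
    rw [div_eq_div_iff hs3pos.ne' (by norm_num : (3:ℝ) ≠ 0)]; nlinarith
  have hinner : 4*(1-(1 - 1 / Real.sqrt 3))^2 - 1 = 1/3 := by
    have : (1 - (1 - 1 / Real.sqrt 3)) = Real.sqrt 3/3 := by rw [← h13]; ring
    rw [this]; field_simp; nlinarith
  have hsq13 : Real.sqrt (1/3) = 1/Real.sqrt 3 := by
    rw [show (1:ℝ)/3 = (3:ℝ)⁻¹ by norm_num, Real.sqrt_inv, one_div]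
  have harct : Real.arctan (1/Real.sqrt 3) = π/6 := by
    rw [← Real.tan_pi_div_six, Real.arctan_tan] <;> linarith [Real.pi_pos]
  rw [PsiF]
  rw [hinner, hsq13, harct]
  have hTval : 2 * (1 - (1 - 1 / Real.sqrt 3)) * (π/6) = Real.sqrt 3 * π / 9 := by
    rw [show (1 - (1 - 1 / Real.sqrt 3)) = 1/Real.sqrt 3 by ring, h13]; ring
  rw [hTval]
  have hT0 : 0 ≤ Real.sqrt 3 * π / 9 := by positivity
  have hTpi : Real.sqrt 3 * π / 9 ≤ π := by nlinarith [Real.pi_pos]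
  set X : ℝ := 12 / 5 * (1 - 1 / Real.sqrt 3) - 1 / 5 with hX
  have hpi315 : π < 3.15 := by
    have := Real.pi_lt_d2; norm_num at this ⊢; linarith
  have hXle : X ≤ Real.cos (Real.sqrt 3 * π / 9) := by
    have hb := Real.one_sub_sq_div_two_le_cos (x := Real.sqrt 3 * π / 9)
    have hT2 : (Real.sqrt 3 * π / 9)^2 = π^2/27 := by
      field_simp; nlinarith
    rw [hT2] at hb
    have : X ≤ 1 - π^2/27/2 := by
      rw [hX, h13]
      nlinarith [Real.pi_pos]
    linarith
  have hX1 : X ≤ 1 := by rw [hX, h13]; nlinarith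
  have hXm1 : -1 ≤ X := by rw [hX, h13]; nlinarith
  have harc : Real.sqrt 3 * π / 9 ≤ Real.arccos X := by
    have h1 : Real.arccos (Real.cos (Real.sqrt 3 * π / 9)) = Real.sqrt 3 * π / 9 :=
      Real.arccos_cos hT0 hTpi
    have h2 := Real.strictAntiOn_arccos.antitoneOn
      (Set.mem_Icc.2 ⟨hXm1, hX1⟩)
      (Set.mem_Icc.2 ⟨Real.neg_one_le_cos _, Real.cos_le_one _⟩) hXle
    rw [h1] at h2
    exact h2
  linarith

lemma PsiF_nonneg : ∀ r ∈ Set.Icc (1 - 1 / Real.sqrt 3) (1/2), 0 ≤ PsiF r := by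
  obtain ⟨hs3sq, hs17, hs2⟩ := sqrt3_facts
  have hs3pos : (0:ℝ) < Real.sqrt 3 := by linarith
  have hab : (1 - 1 / Real.sqrt 3 : ℝ) < 1/2 := by
    have : (1:ℝ)/2 < 1/Real.sqrt 3 := by
      rw [div_lt_div_iff₀ (by norm_num) hs3pos]; nlinarith
    linarith
  intro r hr
  obtain ⟨hra, hrb⟩ := hr
  set a : ℝ := 1 - 1 / Real.sqrt 3 with ha
  have hd : (0:ℝ) < 1/2 - a := by linarith
  set t : ℝ := (1/2 - r)/(1/2 - a) with ht
  set u : ℝ := (r - a)/(1/2 - a) with hu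
  have ht0 : 0 ≤ t := div_nonneg (by linarith) hd.le
  have hu0 : 0 ≤ u := div_nonneg (by linarith) hd.le
  have htu : t + u = 1 := by
    rw [ht, hu, ← add_div, div_eq_one_iff_eq hd.ne']; ring
  have hcomb := PsiF_concave.2 (Set.left_mem_Icc.2 hab.le) (Set.right_mem_Icc.2 hab.le)
    ht0 hu0 htu
  have hpt : t • a + u • (1/2 : ℝ) = r := by
    rw [smul_eq_mul, smul_eq_mul, ht, hu, div_mul_eq_mul_div, div_mul_eq_mul_div,
      ← add_div, div_eq_iff hd.ne']
    ring
  rw [hpt] at hcomb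
  have h1 : 0 ≤ t • PsiF a := by
    rw [smul_eq_mul]; exact mul_nonneg ht0 PsiF_left
  have h2 : u • PsiF (1/2) = 0 := by rw [smul_eq_mul, PsiF_half, mul_zero]
  linarith [hcomb, h1, h2.symm.le, h2.le]

theorem psi_concave_nonneg
    (ψ ℓ : ℝ → ℝ)
    (hψ : ∀ r, ψ r = Real.arccos ((12 / 5) * r - 1 / 5) -
        2 * (1 - r) * Real.arctan (Real.sqrt (4 * (1 - r) ^ 2 - 1)))
    (hℓ : ∀ r, ℓ r = 2 * Real.arctan (Real.sqrt (4 * (1 - r) ^ 2 - 1))) :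
    ConcaveOn ℝ (Set.Icc (1 - 1 / Real.sqrt 3) (1 / 2)) ψ ∧
    ∀ r ∈ Set.Icc (1 - 1 / Real.sqrt 3) (1 / 2),
      0 ≤ ψ r ∧ Real.cos ((1 - r) * ℓ r) ≥ (12 / 5) * r - 1 / 5 := by
  have hfun : ψ = PsiF := funext hψ
  obtain ⟨hs3sq, hs17, hs2⟩ := sqrt3_facts
  refine ⟨hfun ▸ PsiF_concave, ?_⟩
  intro r hr
  have hnn : 0 ≤ ψ r := by rw [hfun]; exact PsiF_nonneg r hr
  refine ⟨hnn, ?_⟩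
  obtain ⟨hra, hrb⟩ := hr
  have hX1 : (12/5) * r - 1/5 ≤ 1 := by linarith
  have h13lt : (1:ℝ)/Real.sqrt 3 < 1 := by
    rw [div_lt_one (by linarith)]; nlinarith
  have hXm1 : (-1 : ℝ) ≤ (12/5) * r - 1/5 := by nlinarith
  have harctnn : 0 ≤ Real.arctan (Real.sqrt (4 * (1 - r) ^ 2 - 1)) := by
    have := Real.arctan_strictMono.monotone (Real.sqrt_nonneg (4 * (1 - r) ^ 2 - 1))
    rwa [Real.arctan_zero] at this
  have hθ0 : 0 ≤ (1 - r) * ℓ r := by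
    rw [hℓ r]
    have h1r : (0:ℝ) ≤ 1 - r := by linarith
    positivity
  have hθle : (1 - r) * ℓ r ≤ Real.arccos ((12/5) * r - 1/5) := by
    have h := hψ r
    rw [hfun] at hnn
    have h2 : PsiF r = Real.arccos ((12 / 5) * r - 1 / 5) -
        2 * (1 - r) * Real.arctan (Real.sqrt (4 * (1 - r) ^ 2 - 1)) := rfl
    rw [h2] at hnn
    rw [hℓ r]
    nlinarith [hnn]
  have hcos := Real.cos_le_cos_of_nonneg_of_le_pi hθ0 (Real.arccos_le_pi _) hθle
  rw [Real.cos_arccos hXm1 hX1] at hcos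
  exact hcos
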